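/- arXiv:1905.01873 — 5 statements merged into one kernel-verified Lean document; each statement's English description precedes it below -/
import Mathlib

section
/- Let k ≥ 1 be an integer and let p, q ∈ ℕ with p ≥ k·q. Let b = b₁⋯b_{p+q} be a binary word in {0,1}^{p+q} with exactly p letters equal to 0 and q letters equal to 1. Then exactly p − k·q of the p+q cyclic rotations b_j b_{j+1} ⋯ b_{p+q} b₁ ⋯ b_{j−1} (for 1 ≤ j ≤ p+q) are k-dominating. -/
/-- A binary word (list of Booleans, where `false` stands for the letter 0 and `true`
for the letter 1) is `k`-dominating if every nonempty prefix contains strictly more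
than `k` times as many 0's as 1's. -/
def Dominating (k : ℕ) (w : List Bool) : Prop :=
  ∀ i ∈ Finset.Icc 1 w.length,
    k * ((w.take i).count true) < (w.take i).count false

instance (k : ℕ) (w : List Bool) : Decidable (Dominating k w) :=
  inferInstanceAs (Decidable (∀ i ∈ Finset.Icc 1 w.length,
    k * ((w.take i).count true) < (w.take i).count false))

lemma notDom (k m : ℕ) (hm : m ≤ k) (s : List Bool) :
    ¬ Dominating k (List.replicate m false ++ true :: s) := by
  intro h
  have := h (m + 1) (by
    simp only [Finset.mem_Icc, List.length_append, List.length_replicate, List.length_cons]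
    omega)
  rw [List.take_append, List.take_of_length_le (by simp),
    List.length_replicate, show m + 1 - m = 0 + 1 from by omega, List.take_succ_cons,
    List.count_append, List.count_append, List.count_replicate, List.count_cons,
    List.count_cons, List.count_replicate] at this
  simp at this
  omega

lemma dom_append_iff (k : ℕ) (u v : List Bool) (hu : u ≠ []) :
    Dominating k (u ++ v) ↔ Dominating k u ∧
      ∀ r ≤ v.length, k * (u.count true + (v.take r).count true)
        < u.count false + (v.take r).count false := by
  have hul : 1 ≤ u.length := List.length_pos_iff.mpr hu
  constructor
  · intro h
    refine ⟨fun i hi => ?_, fun r hr => ?_⟩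
    · simp only [Finset.mem_Icc] at hi
      have := h i (by simp only [Finset.mem_Icc, List.length_append]; omega)
      rwa [List.take_append_of_le_length (by omega)] at this
    · have := h (u.length + r) (by simp only [Finset.mem_Icc, List.length_append]; omega)
      rwa [List.take_append, List.take_of_length_le (by omega),
        show u.length + r - u.length = r from by omega, List.count_append,
        List.count_append] at this
  · rintro ⟨h1, h2⟩ i hi
    simp only [Finset.mem_Icc, List.length_append] at hi
    rcases le_or_gt i u.length with hiu | hiu
    · have := h1 i (by simp only [Finset.mem_Icc]; omega)
      rwa [List.take_append_of_le_length hiu]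
    · have := h2 (i - u.length) (by omega)
      rwa [List.take_append, List.take_of_length_le (by omega),
        List.count_append, List.count_append]

lemma dom_insert (k : ℕ) (u v : List Bool) (hu : u ≠ []) :
    Dominating k (u ++ (List.replicate k false ++ true :: v)) ↔ Dominating k (u ++ v) := by
  rw [dom_append_iff k u _ hu, dom_append_iff k u v hu]
  constructor
  · rintro ⟨hd, hs⟩
    refine ⟨hd, fun r hr => ?_⟩
    have := hs (k + 1 + r) (by
      simp only [List.length_append, List.length_replicate, List.length_cons]; omega)
    rw [List.take_append, List.take_of_length_le (by simp; omega),
      List.length_replicate, show k + 1 + r - k = r + 1 from by omega,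
      List.take_succ_cons, List.count_append, List.count_append, List.count_replicate,
      List.count_replicate, List.count_cons, List.count_cons] at this
    simp at this
    have hexp : k * (u.count true + ((v.take r).count true + 1))
        = k * (u.count true + (v.take r).count true) + k := by ring
    omega
  · rintro ⟨hd, hs⟩
    refine ⟨hd, fun r hr => ?_⟩
    simp only [List.length_append, List.length_replicate, List.length_cons] at hr
    rcases le_or_gt r k with hrk | hrk
    · have := hs 0 (by simp)
      rw [List.take_append_of_le_length (by simp; omega), List.take_replicate,
        List.count_replicate, List.count_replicate, show r ⊓ k = r from by omega]
      simp at this ⊢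
      omega
    · have := hs (r - (k + 1)) (by omega)
      rw [List.take_append, List.take_of_length_le (by simp; omega),
        List.length_replicate, show r - k = (r - (k + 1)) + 1 from by omega,
        List.take_succ_cons, List.count_append, List.count_append, List.count_replicate,
        List.count_replicate, List.count_cons, List.count_cons]
      simp
      have hexp : k * (u.count true + ((v.take (r - (k+1))).count true + 1))
          = k * (u.count true + (v.take (r - (k+1))).count true) + k := by ring
      omega

lemma card_filter_getD (l : List Bool) (x d : Bool) :
    ((Finset.range l.length).filter (fun j => l.getD j d = x)).card = l.count x := by
  induction l with
  | nil => simp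
  | cons a l ih =>
    rw [Finset.card_filter, List.length_cons, Finset.sum_range_succ', ← Finset.card_filter]
    simp only [List.getD_cons_succ, List.getD_cons_zero]
    rw [ih, List.count_cons]
    by_cases h : a = x <;> simp [h]

lemma rot_decomp (b : List Bool) (j : ℕ) (hq : 1 ≤ b.count true) :
    ∃ t, b.rotate j
      = List.replicate (((b.rotate j).takeWhile (fun x => !x)).length) false ++ true :: t := by
  set w := b.rotate j with hw
  have hcnt : w.count true = b.count true := (List.rotate_perm b j).count_eq true
  have hdw : w.dropWhile (fun x => !x) ≠ [] := by
    intro h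
    have htw : w.takeWhile (fun x => !x) = w := by
      conv_rhs => rw [← List.takeWhile_append_dropWhile (p := fun x => !x) (l := w)]
      rw [h, List.append_nil]
    have hmem : true ∉ w := by
      intro hmem
      have := List.mem_takeWhile_imp (htw ▸ hmem)
      simp at this
    have : w.count true = 0 := List.count_eq_zero.mpr hmem
    omega
  refine ⟨(w.dropWhile (fun x => !x)).tail, ?_⟩
  have htw : w.takeWhile (fun x => !x)
      = List.replicate ((w.takeWhile (fun x => !x)).length) false := by
    apply List.eq_replicate_of_mem
    intro x hx
    have := List.mem_takeWhile_imp hx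
    simpa using this
  have hhd : (w.dropWhile (fun x => !x)).head hdw = true := by
    have := List.head_dropWhile_not (fun x => !x) (l := w) hdw
    simpa using this
  conv_lhs => rw [← List.takeWhile_append_dropWhile (p := fun x => !x) (l := w),
    ← List.cons_head_tail hdw, hhd]
  rw [htw]
  simp

lemma exists_rot (k : ℕ) (b : List Bool) (hq : 1 ≤ b.count true)
    (hkq : k * b.count true ≤ b.count false) :
    ∃ m t, b.rotate m = List.replicate k false ++ true :: t := by
  have hn1 : 1 ≤ b.length := le_trans hq List.count_le_length
  set f : ℕ → ℕ := fun j => ((b.rotate j).takeWhile (fun x => !x)).length with hf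
  obtain ⟨m, hm, hmax⟩ := Finset.exists_max_image (Finset.range b.length) f ⟨0, by simp; omega⟩
  set L := f m with hL
  have hgen : ∀ j < b.length,
      f j < b.length ∧ b.getD ((f j + j) % b.length) false = true := by
    intro j hj
    obtain ⟨t, ht⟩ := rot_decomp b j hq
    rw [show (List.takeWhile (fun x => !x) (b.rotate j)).length = f j from by
      simp only [hf]] at ht
    have hfj : f j < b.length := by
      have hl2 := congrArg List.length ht
      simp at hl2
      omega
    refine ⟨hfj, ?_⟩
    rw [List.getD_eq_getElem?_getD]
    rw [← List.getElem?_rotate hfj, ht]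
    rw [List.getElem?_append_right (by simp)]
    simp
  have hpos : ∀ j < b.length, b.getD j true = false → 1 ≤ f j := by
    intro j hj hfalse
    by_contra h
    obtain ⟨t, ht⟩ := rot_decomp b j hq
    rw [show (List.takeWhile (fun x => !x) (b.rotate j)).length = f j from by
      simp only [hf]] at ht
    have hfj0 : f j = 0 := by omega
    rw [hfj0] at ht
    simp only [List.replicate_zero, List.nil_append] at ht
    have h0 : (b.rotate j)[0]? = some true := by rw [ht]; simp
    rw [List.getElem?_rotate (by omega : (0:ℕ) < b.length)] at h0
    rw [Nat.zero_add, Nat.mod_eq_of_lt hj] at h0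
    rw [List.getD_eq_getElem?_getD, h0] at hfalse
    simp at hfalse
  have hcard : b.count false ≤ b.count true * L := by
    have hinj := Finset.card_le_card_of_injOn
      (f := fun j => ((f j + j) % b.length, f j))
      (s := (Finset.range b.length).filter (fun j => b.getD j true = false))
      (t := ((Finset.range b.length).filter (fun j => b.getD j false = true)) ×ˢ
        Finset.Icc 1 L)
      ?_ ?_
    · rw [Finset.card_product, card_filter_getD, card_filter_getD, Nat.card_Icc] at hinj
      simpa using hinj
    · intro j hj
      simp only [Finset.mem_coe, Finset.mem_filter, Finset.mem_range] at hj
      obtain ⟨hgen1, hgen2⟩ := hgen j hj.1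
      simp only [Finset.mem_coe, Finset.mem_product, Finset.mem_filter, Finset.mem_range, Finset.mem_Icc]
      exact ⟨⟨Nat.mod_lt _ (by omega), hgen2⟩, hpos j hj.1 hj.2,
        hmax j (Finset.mem_range.mpr hj.1)⟩
    · intro j1 h1 j2 h2 heq
      simp only [Finset.coe_filter, Set.mem_setOf_eq, Finset.mem_range] at h1 h2
      have hfeq : f j1 = f j2 := (Prod.mk.injEq _ _ _ _ ▸ heq).2
      have hmodeq : (f j1 + j1) % b.length = (f j1 + j2) % b.length := by
        have h' := (Prod.mk.injEq _ _ _ _ ▸ heq).1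
        rw [hfeq]; rw [hfeq] at h'; exact h'
      have hje : j1 ≡ j2 [MOD b.length] := Nat.ModEq.add_left_cancel' (f j1) hmodeq
      rw [Nat.ModEq, Nat.mod_eq_of_lt h1.1, Nat.mod_eq_of_lt h2.1] at hje
      exact hje
  have hkL : k ≤ L := by
    have hq0 : 0 < b.count true := hq
    have hmul : k * b.count true ≤ L * b.count true := by
      calc k * b.count true ≤ b.count false := hkq
        _ ≤ b.count true * L := hcard
        _ = L * b.count true := Nat.mul_comm _ _
    exact Nat.le_of_mul_le_mul_right hmul hq0
  obtain ⟨t, ht⟩ := rot_decomp b m hq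
  rw [show (List.takeWhile (fun x => !x) (b.rotate m)).length = L from by
    simp only [hL, hf]] at ht
  refine ⟨m + (L - k), t ++ List.replicate (L - k) false, ?_⟩
  rw [← List.rotate_rotate, ht]
  have hsplit : List.replicate L (false : Bool)
      = List.replicate (L - k) false ++ List.replicate k false := by
    rw [← List.replicate_add, Nat.sub_add_cancel hkL]
  rw [hsplit, List.append_assoc]
  rw [List.rotate_eq_drop_append_take (by simp)]
  simp [List.drop_append, List.take_append,
    List.drop_replicate, List.take_replicate]

lemma card_rot (k m : ℕ) (b : List Bool) :
    ((Finset.range b.length).filter (fun j => Dominating k ((b.rotate m).rotate j))).card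
    = ((Finset.range b.length).filter (fun j => Dominating k (b.rotate j))).card := by
  rcases Nat.eq_zero_or_pos b.length with h0 | hn
  · rw [h0]; simp
  apply Finset.card_bij (i := fun j _ => (m + j) % b.length)
  · intro j hj
    simp only [Finset.mem_filter, Finset.mem_range] at hj ⊢
    refine ⟨Nat.mod_lt _ hn, ?_⟩
    rw [List.rotate_mod, List.rotate_rotate] at *
    exact hj.2
  · intro j1 h1 j2 h2 heq
    simp only [Finset.mem_filter, Finset.mem_range] at h1 h2
    have hje : j1 ≡ j2 [MOD b.length] := Nat.ModEq.add_left_cancel' m heq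
    rwa [Nat.ModEq, Nat.mod_eq_of_lt h1.1, Nat.mod_eq_of_lt h2.1] at hje
  · intro j hj
    simp only [Finset.mem_filter, Finset.mem_range] at hj
    have hkey : (m + (j + (b.length - m % b.length))) % b.length = j := by
      have hmn : m % b.length < b.length := Nat.mod_lt _ hn
      have hdiv := Nat.mod_add_div m b.length
      set d := b.length * (m / b.length) with hd
      rw [show m + (j + (b.length - m % b.length)) = j + b.length * (m / b.length + 1) from by
        rw [Nat.mul_add, Nat.mul_one, ← hd]; omega]
      rw [Nat.add_mul_mod_self_left]
      exact Nat.mod_eq_of_lt hj.1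
    refine ⟨(j + (b.length - m % b.length)) % b.length, ?_, ?_⟩
    · simp only [Finset.mem_filter, Finset.mem_range]
      refine ⟨Nat.mod_lt _ hn, ?_⟩
      rw [List.rotate_rotate, ← List.rotate_mod, Nat.add_mod_mod, hkey]
      exact hj.2
    · rw [Nat.add_mod_mod, hkey]

lemma key (k : ℕ) (hk : 1 ≤ k) :
    ∀ q p (b : List Bool), k * q ≤ p → b.length = p + q → b.count false = p →
      b.count true = q →
      ((Finset.range (p + q)).filter (fun j => Dominating k (b.rotate j))).card = p - k * q := by
  intro q
  induction q with
  | zero =>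
    intro p b _ hlen h0 h1
    have hmem : ∀ x ∈ b, x = false := by
      intro x hx
      cases x
      · rfl
      · exact absurd hx (List.count_eq_zero.mp h1)
    have hrep : b = List.replicate p false := by
      have h2 := List.eq_replicate_of_mem hmem
      have h3 : b.length = p := by omega
      rw [h3] at h2
      exact h2
    subst hrep
    have hdom : Dominating k (List.replicate p false) := by
      intro i hi
      simp only [Finset.mem_Icc, List.length_replicate] at hi
      rw [List.take_replicate, List.count_replicate, List.count_replicate,
        show i ⊓ p = i from by omega]
      simp
      omega
    simp [List.rotate_replicate, hdom, Finset.filter_true_of_mem]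
  | succ q ih =>
    intro p b hpq hlen h0 h1
    have hkp : k ≤ p := by
      have e : k * (q + 1) = k * q + k := by ring
      omega
    obtain ⟨m, t, hm⟩ := exists_rot k b (by omega) (by rw [h0, h1]; exact hpq)
    have hcr := card_rot k m b
    rw [hlen] at hcr
    rw [← hcr, hm]
    set b' : List Bool := List.replicate k false ++ true :: t with hb'
    have hlen' : b'.length = p + (q + 1) := by
      rw [← hm, List.length_rotate, hlen]
    have hcf : b'.count false = p := by
      rw [← hm, (List.rotate_perm b m).count_eq false, h0]
    have hct : b'.count true = q + 1 := by
      rw [← hm, (List.rotate_perm b m).count_eq true, h1]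
    have htlen : t.length = (p - k) + q := by
      have h' := hlen'
      rw [hb'] at h'; simp at h'; omega
    have htf : t.count false = p - k := by
      have h' := hcf
      rw [hb'] at h'; simp [List.count_append, List.count_replicate] at h'; omega
    have htt : t.count true = q := by
      have h' := hct
      rw [hb'] at h'; simp [List.count_append, List.count_replicate] at h'; omega
    -- the rotation correspondence
    have hrot : ∀ i < t.length, (Dominating k (b'.rotate (i + (k + 1))) ↔
        Dominating k (t.rotate i)) := by
      intro i hi
      have hsplit : b' = (List.replicate k false ++ [true]) ++ t := by
        rw [hb']; simp
      have h1' : b'.rotate (i + (k + 1)) = (t ++ (List.replicate k false ++ [true])).rotate i := by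
        rw [Nat.add_comm i (k + 1), ← List.rotate_rotate]
        congr 1
        rw [hsplit, show k + 1 = (List.replicate k (false : Bool) ++ [true]).length from by simp]
        exact List.rotate_append_length_eq _ _
      rw [h1']
      have h2' : (t ++ (List.replicate k false ++ [true])).rotate i
          = t.drop i ++ (List.replicate k false ++ true :: t.take i) := by
        rw [List.rotate_eq_drop_append_take (by simp; omega)]
        rw [List.drop_append_of_le_length (by omega), List.take_append_of_le_length (by omega)]
        simp
      rw [h2']
      have h3' : t.rotate i = t.drop i ++ t.take i :=
        List.rotate_eq_drop_append_take (by omega)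
      rw [h3']
      exact dom_insert k (t.drop i) (t.take i)
        (by intro hnil; have := congrArg List.length hnil; simp at this; omega)
    have hnd : ∀ j ≤ k, ¬ Dominating k (b'.rotate j) := by
      intro j hj
      have hr : b'.rotate j = List.replicate (k - j) false ++ true :: (t ++ List.replicate j false) := by
        rw [List.rotate_eq_drop_append_take (by rw [hlen']; omega), hb']
        rw [List.drop_append_of_le_length (by simp; omega),
          List.take_append_of_le_length (by simp; omega)]
        rw [List.drop_replicate, List.take_replicate, show j ⊓ k = j from by omega]
        simp
      rw [hr]
      exact notDom k (k - j) (by omega) _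
    -- bijection between the two filters
    have hbij : ((Finset.range (p + (q + 1))).filter
        (fun j => Dominating k (b'.rotate j))).card
        = ((Finset.range ((p - k) + q)).filter (fun j => Dominating k (t.rotate j))).card := by
      symm
      apply Finset.card_bij (i := fun i _ => i + (k + 1))
      · intro i hi
        simp only [Finset.mem_filter, Finset.mem_range] at hi ⊢
        refine ⟨by omega, ?_⟩
        exact (hrot i (by omega)).mpr hi.2
      · intro i1 h1' i2 h2' heq
        omega
      · intro j hj
        simp only [Finset.mem_filter, Finset.mem_range] at hj
        have hjk : k + 1 ≤ j := by
          by_contra hle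
          exact hnd j (by omega) hj.2
        refine ⟨j - (k + 1), ?_, by omega⟩
        simp only [Finset.mem_filter, Finset.mem_range]
        have hjlt : j - (k + 1) < t.length := by omega
        refine ⟨by omega, (hrot _ hjlt).mp ?_⟩
        rw [show j - (k + 1) + (k + 1) = j from by omega]
        exact hj.2
    rw [hbij, ih (p - k) t (by
        have e : k * (q + 1) = k * q + k := by ring
        omega)
      (by omega) htf htt]
    have e : k * (q + 1) = k * q + k := by ring
    omega

/-- Cycle lemma (Dershowitz–Zaks): if `b` is a binary word with `p` letters 0 and `q`
letters 1, where `p ≥ k·q` and `k ≥ 1`, then exactly `p − k·q` of its `p+q` cyclic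
rotations are `k`-dominating. -/
theorem cycle_lemma (k p q : ℕ) (hk : 1 ≤ k) (hpq : k * q ≤ p)
    (b : List Bool) (hlen : b.length = p + q)
    (h0 : b.count false = p) (h1 : b.count true = q) :
    {j : ℕ | j < p + q ∧ Dominating k (b.rotate j)}.ncard = p - k * q := by
  have hset : {j : ℕ | j < p + q ∧ Dominating k (b.rotate j)}
      = ↑((Finset.range (p + q)).filter (fun j => Dominating k (b.rotate j))) := by
    ext j
    simp [Finset.mem_filter, Finset.mem_range]
  rw [hset, Set.ncard_coe_finset]
  exact key k hk q p b hpq hlen h0 h1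
end

section
/- For every ρ ∈ ℕ and every τ ∈ ℕ with τ ≥ 1, the number of 3-dominating binary words of length 4ρ+τ with exactly 3ρ+τ letters 0 and ρ letters 1 satisfies (4ρ+τ) · |𝒟_{3,3ρ+τ,ρ}| = τ · C(4ρ+τ, ρ), where C denotes the binomial coefficient; equivalently |𝒟_{3,3ρ+τ,ρ}| = (τ/(4ρ+τ)) · C(4ρ+τ, ρ). -/
/-- `𝒟_{k,p,q}` : `k`-dominating binary words with `p` letters 0 and `q` letters 1. -/
def DSet (k p q : ℕ) : Set (List Bool) :=
  {w | w.length = p + q ∧ w.count false = p ∧ w.count true = q ∧ Dominating k w}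

lemma dominating_concat (k : ℕ) (w : List Bool) (b : Bool) :
    Dominating k (w ++ [b]) ↔ Dominating k w ∧
      k * (w ++ [b]).count true < (w ++ [b]).count false := by
  constructor
  · intro h
    constructor
    · intro i hi
      simp only [Finset.mem_Icc] at hi
      have h2 := h i (by simp only [Finset.mem_Icc, List.length_append,
        List.length_singleton]; omega)
      rwa [List.take_append_of_le_length (by omega)] at h2
    · have h2 := h (w.length + 1) (by simp [Finset.mem_Icc])
      rwa [List.take_of_length_le (by simp)] at h2
  · rintro ⟨hd, hf⟩ i hi
    simp only [Finset.mem_Icc, List.length_append, List.length_singleton] at hi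
    rcases Nat.lt_or_ge i (w.length + 1) with hlt | hge
    · rw [List.take_append_of_le_length (by omega)]
      exact hd i (by simp only [Finset.mem_Icc]; omega)
    · rwa [List.take_of_length_le (by simp; omega)]

lemma concat_true_mem_iff (k p q : ℕ) (w : List Bool) :
    w ++ [true] ∈ DSet k p (q + 1) ↔ w ∈ DSet k p q ∧ k * (q + 1) < p := by
  simp only [DSet, Set.mem_setOf_eq, dominating_concat, List.count_append,
    List.length_append, List.length_singleton, List.count_singleton]
  constructor
  · rintro ⟨h1, h2, h3, h4, h5⟩
    simp at h2 h3
    simp at h5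
    have hq : w.count true = q := by omega
    have hp : w.count false = p := by omega
    rw [hq, hp] at h5
    exact ⟨⟨by omega, hp, hq, h4⟩, by omega⟩
  · rintro ⟨⟨h1, h2, h3, h4⟩, h5⟩
    refine ⟨by omega, by simp; omega, by simp; omega, h4, by simp [h2, h3]; omega⟩

lemma concat_false_mem_iff (k p q : ℕ) (w : List Bool) :
    w ++ [false] ∈ DSet k (p + 1) q ↔ w ∈ DSet k p q ∧ k * q < p + 1 := by
  simp only [DSet, Set.mem_setOf_eq, dominating_concat, List.count_append,
    List.length_append, List.length_singleton, List.count_singleton]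
  constructor
  · rintro ⟨h1, h2, h3, h4, h5⟩
    simp at h2 h3
    simp at h5
    have hq : w.count true = q := by omega
    have hp : w.count false = p := by omega
    rw [hq, hp] at h5
    exact ⟨⟨by omega, hp, hq, h4⟩, by omega⟩
  · rintro ⟨⟨h1, h2, h3, h4⟩, h5⟩
    refine ⟨by omega, by simp; omega, by simp; omega, h4, by simp [h2, h3]; omega⟩

lemma dset_finite (k p q : ℕ) : (DSet k p q).Finite :=
  (List.finite_length_eq Bool (p + q)).subset (fun _ hw => hw.1)

lemma decomp (r t : ℕ) :
    DSet 3 (3*r+t+4) (r+1) =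
      (fun w => w ++ [true]) '' DSet 3 (3*r+t+4) r ∪
      (fun w => w ++ [false]) '' DSet 3 (3*r+t+3) (r+1) := by
  have e : 3*r+t+4 = (3*r+t+3)+1 := by omega
  ext w
  constructor
  · intro hw
    rcases List.eq_nil_or_concat w with rfl | ⟨u, b, rfl⟩
    · have := hw.1; simp at this
    · rw [List.concat_eq_append] at hw
      cases b
      · right
        rw [e] at hw
        exact ⟨u, ((concat_false_mem_iff 3 (3*r+t+3) (r+1) u).1 hw).1, List.concat_eq_append.symm⟩
      · left
        exact ⟨u, ((concat_true_mem_iff 3 (3*r+t+4) r u).1 hw).1, List.concat_eq_append.symm⟩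
  · rintro (⟨u, hu, rfl⟩ | ⟨u, hu, rfl⟩)
    · exact (concat_true_mem_iff 3 (3*r+t+4) r u).2 ⟨hu, by omega⟩
    · rw [e]
      exact (concat_false_mem_iff 3 (3*r+t+3) (r+1) u).2 ⟨hu, by omega⟩

lemma card_rec (r t : ℕ) :
    Nat.card (DSet 3 (3*r+t+4) (r+1)) =
      Nat.card (DSet 3 (3*r+t+4) r) + Nat.card (DSet 3 (3*r+t+3) (r+1)) := by
  rw [Nat.card_coe_set_eq, Nat.card_coe_set_eq, Nat.card_coe_set_eq, decomp,
    Set.ncard_union_eq ?_ ?_ ?_]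
  · rw [Set.ncard_image_of_injective _ (List.append_left_injective [true]),
      Set.ncard_image_of_injective _ (List.append_left_injective [false])]
  · rw [Set.disjoint_left]
    rintro x ⟨u, _, rfl⟩ ⟨v, _, hv⟩
    have := congrArg List.getLast? hv
    simp at this
  · exact ((dset_finite _ _ _).image _)
  · exact ((dset_finite _ _ _).image _)

lemma card_zero (τ : ℕ) : Nat.card (DSet 3 τ 0) = 1 := by
  have : DSet 3 τ 0 = {List.replicate τ false} := by
    ext w
    constructor
    · rintro ⟨h1, h2, h3, h4⟩
      have : ∀ b ∈ w, false = b := by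
        rw [← List.count_eq_length]; omega
      simp only [Set.mem_singleton_iff]
      exact List.eq_replicate_iff.2 ⟨by omega, fun b hb => (this b hb).symm⟩
    · rintro rfl
      refine ⟨by simp, by simp [List.count_replicate], by simp [List.count_replicate],
        fun i hi => ?_⟩
      simp only [Finset.mem_Icc, List.length_replicate] at hi
      rw [List.take_replicate]
      simp [List.count_replicate]
      omega
  rw [Nat.card_coe_set_eq, this, Set.ncard_singleton]

lemma card_empty (r : ℕ) : Nat.card (DSet 3 (3*r+3) (r+1)) = 0 := by
  have : DSet 3 (3*r+3) (r+1) = ∅ := by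
    ext w
    simp only [Set.mem_empty_iff_false, iff_false]
    rintro ⟨h1, h2, h3, h4⟩
    have := h4 w.length (by simp [Finset.mem_Icc]; omega)
    rw [List.take_length] at this
    omega
  rw [Nat.card_coe_set_eq, this, Set.ncard_empty]

lemma key_s2 : ∀ n ρ τ, 4*ρ+τ = n →
    (4*ρ+τ) * Nat.card (DSet 3 (3*ρ+τ) ρ) = τ * (4*ρ+τ).choose ρ := by
  intro n
  induction n using Nat.strong_induction_on with
  | _ n ih =>
  intro ρ τ hn
  subst hn
  rcases ρ with _ | r
  · simp [card_zero, -Nat.card_coe_set_eq]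
  rcases τ with _ | t
  · have e : 3*(r+1)+0 = 3*r+3 := by omega
    rw [e, card_empty]
    simp
  · have e4 : 3*(r+1)+(t+1) = 3*r+t+4 := by omega
    rw [e4, card_rec r t]
    have IH1 := ih (4*r+(t+4)) (by omega) r (t+4) rfl
    have IH2 := ih (4*(r+1)+t) (by omega) (r+1) t rfl
    have e1 : 3*r+(t+4) = 3*r+t+4 := by omega
    have e1' : 4*r+(t+4) = 4*r+t+4 := by omega
    have e2 : 3*(r+1)+t = 3*r+t+3 := by omega
    have e2' : 4*(r+1)+t = 4*r+t+4 := by omega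
    rw [e1, e1'] at IH1
    rw [e2, e2'] at IH2
    have ePas : 4*(r+1)+(t+1) = (4*r+t+4)+1 := by omega
    rw [ePas, Nat.choose_succ_succ]
    have h3 := Nat.choose_succ_right_eq (4*r+t+4) r
    have e3 : 4*r+t+4 - r = 3*r+t+4 := by omega
    rw [e3] at h3
    set a := Nat.card (DSet 3 (3*r+t+4) r)
    set b := Nat.card (DSet 3 (3*r+t+3) (r+1))
    set C1 := (4*r+t+4).choose r
    set C2 := (4*r+t+4).choose (r+1)
    apply Nat.eq_of_mul_eq_mul_left (show 0 < 4*r+t+4 by omega)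
    zify at IH1 IH2 h3 ⊢
    linear_combination (4*r+t+5) * IH1 + (4*r+t+5) * IH2 - 4 * h3

/-- The number of 3-dominating binary words of length `4ρ+τ` with `3ρ+τ` letters 0
and `ρ` letters 1 satisfies `(4ρ+τ) · |𝒟_{3,3ρ+τ,ρ}| = τ · C(4ρ+τ, ρ)`. -/
theorem card_dSet (ρ τ : ℕ) (hτ : 1 ≤ τ) :
    (4 * ρ + τ) * Nat.card ↥(DSet 3 (3 * ρ + τ) ρ) = τ * Nat.choose (4 * ρ + τ) ρ := by
  exact key_s2 (4*ρ+τ) ρ τ rfl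
end

section
/- Let ρ > 0, σ > 0 and γ ∈ ℝ. Set L_n = 2⌊√(2n)·σ⌋ + ⌊(8n/9)^{1/4}·γ⌋ and m_n = ⌊nρ⌋ (both are positive for all sufficiently large n). Then, as n → ∞, the ratio (∏_{p=1}^{L_n} (1 + p/(4 m_n))) / (∏_{p=1}^{L_n} (1 + p/(3 m_n))) converges to exp(−σ²/(3ρ)). -/
open Filter

/-- `L_n = 2⌊√(2n)·σ⌋ + ⌊(8n/9)^{1/4}·γ⌋`. -/
noncomputable def Lseq (σ γ : ℝ) (n : ℕ) : ℤ :=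
  2 * ⌊Real.sqrt (2 * (n : ℝ)) * σ⌋ + ⌊(8 * (n : ℝ) / 9) ^ ((1 : ℝ) / 4) * γ⌋

/-- `m_n = ⌊nρ⌋`. -/
noncomputable def mseq (ρ : ℝ) (n : ℕ) : ℤ := ⌊(n : ℝ) * ρ⌋

lemma gauss_Icc (L : ℤ) (hL : 0 ≤ L) :
    (∑ p ∈ Finset.Icc (1 : ℤ) L, (p : ℝ)) = L * (L + 1) / 2 := by
  refine Int.le_induction (motive := fun L _ => (∑ p ∈ Finset.Icc (1:ℤ) L, (p:ℝ)) = L*(L+1)/2) ?_ ?_ L hL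
  · simp
  · intro n hn ih
    have h : Finset.Icc (1 : ℤ) (n + 1) = insert (n + 1) (Finset.Icc (1 : ℤ) n) := by
      ext x; simp only [Finset.mem_Icc, Finset.mem_insert]; omega
    rw [h, Finset.sum_insert (by simp), ih]
    push_cast; ring

lemma log_one_add_le {x : ℝ} (hx : 0 ≤ x) : Real.log (1 + x) ≤ x := by
  have := Real.log_le_sub_one_of_pos (x := 1 + x) (by linarith)
  linarith

lemma le_log_one_add {x : ℝ} (hx : 0 ≤ x) : x - x ^ 2 ≤ Real.log (1 + x) := by
  have h1 : (0:ℝ) < 1 + x := by linarith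
  have h2 : Real.log (1 + x)⁻¹ ≤ (1 + x)⁻¹ - 1 :=
    Real.log_le_sub_one_of_pos (by positivity)
  rw [Real.log_inv] at h2
  have h3 : x / (1 + x) ≤ Real.log (1 + x) := by
    have he : (1:ℝ) - (1+x)⁻¹ = x / (1+x) := by field_simp; ring
    linarith [he ▸ (by linarith : (1:ℝ) - (1+x)⁻¹ ≤ Real.log (1+x))]
  have h4 : x - x ^ 2 ≤ x / (1 + x) := by
    rw [le_div_iff₀ h1]; nlinarith
  linarith

lemma sqrt_nat_tendsto : Tendsto (fun n : ℕ => Real.sqrt n) atTop atTop := by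
  have h := (tendsto_rpow_atTop (y := (1:ℝ)/2) (by norm_num)).comp
    (tendsto_natCast_atTop_atTop (R := ℝ))
  refine h.congr fun n => ?_
  simp [Real.sqrt_eq_rpow, Function.comp]

lemma inv_sqrt_tendsto : Tendsto (fun n : ℕ => (Real.sqrt n)⁻¹) atTop (nhds 0) :=
  sqrt_nat_tendsto.inv_tendsto_atTop

lemma mseq_div_tendsto (ρ : ℝ) :
    Tendsto (fun n : ℕ => ((mseq ρ n : ℝ)) / n) atTop (nhds ρ) := by
  have hlow : Tendsto (fun n : ℕ => ρ - 1 / (n:ℝ)) atTop (nhds ρ) := by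
    simpa using tendsto_const_nhds.sub (tendsto_one_div_atTop_nhds_zero_nat (𝕜 := ℝ))
  refine tendsto_of_tendsto_of_tendsto_of_le_of_le' hlow tendsto_const_nhds ?_ ?_
  · filter_upwards [eventually_gt_atTop 0] with n hn
    have hn' : (0:ℝ) < n := by exact_mod_cast hn
    have h1 : (n:ℝ) * ρ - 1 ≤ (mseq ρ n : ℝ) := (Int.sub_one_lt_floor _).le
    rw [le_div_iff₀ hn']
    have h2 : (ρ - 1/(n:ℝ)) * n = (n:ℝ) * ρ - 1 := by field_simp
    linarith
  · filter_upwards [eventually_gt_atTop 0] with n hn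
    have hn' : (0:ℝ) < n := by exact_mod_cast hn
    rw [div_le_iff₀ hn', mul_comm]
    exact Int.floor_le _

lemma part2_tendsto (γ : ℝ) :
    Tendsto (fun n : ℕ => ((⌊(8 * (n : ℝ) / 9) ^ ((1 : ℝ) / 4) * γ⌋ : ℝ)) / Real.sqrt n)
      atTop (nhds 0) := by
  have hb : Tendsto (fun n : ℕ => |γ| * ((n:ℝ) ^ ((1:ℝ)/4) / Real.sqrt n) + (Real.sqrt n)⁻¹)
      atTop (nhds 0) := by
    have h1 : Tendsto (fun n : ℕ => (n:ℝ) ^ ((1:ℝ)/4) / Real.sqrt n) atTop (nhds 0) := by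
      have : Tendsto (fun n : ℕ => (n:ℝ) ^ (-(1:ℝ)/4)) atTop (nhds 0) := by
        have := (tendsto_rpow_neg_atTop (y := (1:ℝ)/4) (by norm_num)).comp
          (tendsto_natCast_atTop_atTop (R := ℝ))
        simpa [neg_div, Function.comp_def] using this
      refine this.congr' ?_
      filter_upwards [eventually_gt_atTop 0] with n hn
      have hn' : (0:ℝ) < n := by exact_mod_cast hn
      rw [Real.sqrt_eq_rpow, ← Real.rpow_sub hn']
      norm_num
    simpa using (tendsto_const_nhds.mul h1).add inv_sqrt_tendsto
  refine squeeze_zero_norm' ?_ hb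
  filter_upwards [eventually_ge_atTop 1] with n hn
  have hn' : (0:ℝ) < n := by exact_mod_cast hn
  have hs : (0:ℝ) < Real.sqrt n := Real.sqrt_pos.mpr hn'
  set t : ℝ := (8 * (n : ℝ) / 9) ^ ((1 : ℝ) / 4) with ht
  have htle : t ≤ (n:ℝ) ^ ((1:ℝ)/4) := by
    apply Real.rpow_le_rpow (by positivity) (by linarith) (by norm_num)
  have ht0 : 0 ≤ t := Real.rpow_nonneg (by positivity) _
  have hfloor : |(⌊t * γ⌋ : ℝ)| ≤ |γ| * (n:ℝ) ^ ((1:ℝ)/4) + 1 := by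
    have h1 : (⌊t * γ⌋ : ℝ) ≤ t * γ := Int.floor_le _
    have h2 : t * γ - 1 < (⌊t * γ⌋ : ℝ) := Int.sub_one_lt_floor _
    have habs : |t * γ| ≤ |γ| * (n:ℝ) ^ ((1:ℝ)/4) := by
      rw [abs_mul, abs_of_nonneg ht0, mul_comm]
      exact mul_le_mul_of_nonneg_left htle (abs_nonneg _)
    rw [abs_le]
    constructor
    · nlinarith [neg_abs_le (t * γ)]
    · nlinarith [le_abs_self (t * γ)]
  rw [norm_div, Real.norm_eq_abs, Real.norm_eq_abs, abs_of_pos hs, div_le_iff₀ hs]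
  calc |(⌊t * γ⌋ : ℝ)| ≤ |γ| * (n:ℝ) ^ ((1:ℝ)/4) + 1 := hfloor
  _ = (|γ| * ((n:ℝ) ^ ((1:ℝ)/4) / Real.sqrt n) + (Real.sqrt n)⁻¹) * Real.sqrt n := by
      field_simp

lemma part1_tendsto (σ : ℝ) :
    Tendsto (fun n : ℕ => ((⌊Real.sqrt (2 * (n:ℝ)) * σ⌋ : ℝ)) / Real.sqrt n)
      atTop (nhds (Real.sqrt 2 * σ)) := by
  have hlow : Tendsto (fun n : ℕ => Real.sqrt 2 * σ - (Real.sqrt n)⁻¹) atTop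
      (nhds (Real.sqrt 2 * σ)) := by
    simpa using tendsto_const_nhds.sub inv_sqrt_tendsto
  refine tendsto_of_tendsto_of_tendsto_of_le_of_le' hlow tendsto_const_nhds ?_ ?_
  all_goals
    filter_upwards [eventually_ge_atTop 1] with n hn
  all_goals
    have hn' : (0:ℝ) < n := by exact_mod_cast hn
    have hs : (0:ℝ) < Real.sqrt n := Real.sqrt_pos.mpr hn'
    have hkey : Real.sqrt (2 * (n:ℝ)) = Real.sqrt 2 * Real.sqrt n := Real.sqrt_mul (by norm_num) _
  · rw [le_div_iff₀ hs]
    have h2 : Real.sqrt (2 * (n:ℝ)) * σ - 1 < (⌊Real.sqrt (2 * (n:ℝ)) * σ⌋ : ℝ) :=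
      Int.sub_one_lt_floor _
    have he : (Real.sqrt 2 * σ - (Real.sqrt n)⁻¹) * Real.sqrt n
        = Real.sqrt 2 * Real.sqrt n * σ - 1 := by
      field_simp
    rw [hkey] at h2 ⊢
    linarith
  · rw [div_le_iff₀ hs]
    have h1 : (⌊Real.sqrt (2 * (n:ℝ)) * σ⌋ : ℝ) ≤ Real.sqrt (2 * (n:ℝ)) * σ := Int.floor_le _
    rw [hkey] at h1 ⊢
    have he : Real.sqrt 2 * σ * Real.sqrt n = Real.sqrt 2 * Real.sqrt n * σ := by ring
    linarith

lemma Lseq_div_tendsto (σ γ : ℝ) :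
    Tendsto (fun n : ℕ => ((Lseq σ γ n : ℝ)) / Real.sqrt n) atTop
      (nhds (2 * Real.sqrt 2 * σ)) := by
  have h := ((part1_tendsto σ).const_mul (2:ℝ)).add (part2_tendsto γ)
  have he : (2:ℝ) * (Real.sqrt 2 * σ) + 0 = 2 * Real.sqrt 2 * σ := by ring
  rw [he] at h
  refine h.congr ?_
  intro n
  simp only [Lseq]
  push_cast
  ring

set_option maxHeartbeats 1600000 in
/-- As `n → ∞`, the ratio
`(∏_{p=1}^{L_n} (1 + p/(4 m_n))) / (∏_{p=1}^{L_n} (1 + p/(3 m_n)))`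
converges to `exp(−σ²/(3ρ))`. -/
theorem tendsto_ratio_prod (ρ σ γ : ℝ) (hρ : 0 < ρ) (hσ : 0 < σ) :
    Tendsto
      (fun n : ℕ =>
        (∏ p ∈ Finset.Icc (1 : ℤ) (Lseq σ γ n),
            (1 + (p : ℝ) / (4 * (mseq ρ n : ℝ)))) /
        (∏ p ∈ Finset.Icc (1 : ℤ) (Lseq σ γ n),
            (1 + (p : ℝ) / (3 * (mseq ρ n : ℝ)))))
      atTop (nhds (Real.exp (-σ ^ 2 / (3 * ρ)))) := by
  set c : ℝ := 2 * Real.sqrt 2 * σ with hc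
  have hsqrt2 : Real.sqrt 2 * Real.sqrt 2 = 2 := Real.mul_self_sqrt (by norm_num)
  have hc0 : 0 < c := by
    have : 0 < Real.sqrt 2 := Real.sqrt_pos.mpr (by norm_num)
    positivity
  have hLlim := Lseq_div_tendsto σ γ
  have hMlim := mseq_div_tendsto ρ
  set l : ℕ → ℝ := fun n => ((Lseq σ γ n : ℤ) : ℝ) with hl_def
  set M : ℕ → ℝ := fun n => ((mseq ρ n : ℤ) : ℝ) with hM_def
  -- eventual: M n ≥ 1
  have hM1 : ∀ᶠ n : ℕ in atTop, (1:ℝ) ≤ M n := by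
    have hn1 : ∀ᶠ n : ℕ in atTop, (1:ℝ) ≤ (n:ℝ) * ρ := by
      have h := (tendsto_natCast_atTop_atTop (R := ℝ)).atTop_mul_const hρ
      exact h.eventually_ge_atTop 1
    filter_upwards [hn1] with n hn
    have h1 : (1:ℤ) ≤ ⌊(n:ℝ) * ρ⌋ := Int.le_floor.mpr (by exact_mod_cast hn)
    have : ((1:ℤ):ℝ) ≤ ((⌊(n:ℝ) * ρ⌋ : ℤ) : ℝ) := by exact_mod_cast h1
    simpa [hM_def, mseq] using this
  -- eventual: Lseq ≥ 0
  have hL1 : ∀ᶠ n : ℕ in atTop, 0 ≤ Lseq σ γ n := by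
    have he : ∀ᶠ n : ℕ in atTop, c/2 ≤ l n / Real.sqrt n :=
      hLlim.eventually (eventually_ge_nhds (by linarith))
    filter_upwards [he, eventually_ge_atTop 1] with n hn hn1
    have hn' : (0:ℝ) < n := by exact_mod_cast hn1
    have hs : (0:ℝ) < Real.sqrt n := Real.sqrt_pos.mpr hn'
    have h0 : (0:ℝ) ≤ ((Lseq σ γ n : ℤ) : ℝ) := by
      show (0:ℝ) ≤ l n
      have := (le_div_iff₀ hs).mp hn
      nlinarith
    exact_mod_cast h0
  -- the log-sum
  set f : ℕ → ℝ := fun n => ∑ p ∈ Finset.Icc (1:ℤ) (Lseq σ γ n),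
      (Real.log (1 + (p:ℝ)/(4 * M n)) - Real.log (1 + (p:ℝ)/(3 * M n))) with hf_def
  set S : ℕ → ℝ := fun n => -(l n * (l n + 1)) / (24 * M n) with hS_def
  set T : ℕ → ℝ := fun n => l n ^ 3 / M n ^ 2 with hT_def
  -- limit of S
  have hS : Tendsto S atTop (nhds (-σ ^ 2 / (3 * ρ))) := by
    have haux : Tendsto (fun n : ℕ =>
        -((l n / Real.sqrt n) * (l n / Real.sqrt n + (Real.sqrt n)⁻¹)) / (24 * (M n / n)))
        atTop (nhds (-(c * (c + 0)) / (24 * ρ))) := by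
      exact ((hLlim.mul (hLlim.add inv_sqrt_tendsto)).neg).div
        ((hMlim.const_mul 24)) (by positivity)
    have hval : -(c * (c + 0)) / (24 * ρ) = -σ ^ 2 / (3 * ρ) := by
      have hcc : c * c = 8 * σ ^ 2 := by rw [hc]; nlinarith [hsqrt2]
      rw [add_zero, hcc]
      field_simp
      ring
    rw [hval] at haux
    refine haux.congr' ?_
    filter_upwards [eventually_ge_atTop 1, hM1] with n hn1 hm
    have hn' : (0:ℝ) < n := by exact_mod_cast hn1
    have hs : (0:ℝ) < Real.sqrt n := Real.sqrt_pos.mpr hn'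
    have hsq : Real.sqrt n * Real.sqrt n = (n:ℝ) := Real.mul_self_sqrt hn'.le
    have hM0 : M n ≠ 0 := by linarith
    rw [hS_def]
    field_simp
    rw [Real.sq_sqrt hn'.le]
    ring
  -- limit of T
  have hT : Tendsto T atTop (nhds 0) := by
    have haux : Tendsto (fun n : ℕ =>
        (l n / Real.sqrt n) ^ 3 * ((M n / n)⁻¹) ^ 2 * (Real.sqrt n)⁻¹)
        atTop (nhds (c ^ 3 * (ρ⁻¹) ^ 2 * 0)) :=
      (((hLlim.pow 3).mul ((hMlim.inv₀ hρ.ne').pow 2))).mul inv_sqrt_tendsto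
    rw [mul_zero] at haux
    refine haux.congr' ?_
    filter_upwards [eventually_ge_atTop 1, hM1] with n hn1 hm
    have hn' : (0:ℝ) < n := by exact_mod_cast hn1
    have hs : (0:ℝ) < Real.sqrt n := Real.sqrt_pos.mpr hn'
    have hsq : Real.sqrt n * Real.sqrt n = (n:ℝ) := Real.mul_self_sqrt hn'.le
    have hM0 : M n ≠ 0 := by linarith
    rw [hT_def]
    have hs4 : Real.sqrt n ^ 4 = (n:ℝ) ^ 2 := by
      rw [show Real.sqrt (n:ℝ) ^ 4 = (Real.sqrt n * Real.sqrt n) ^ 2 by ring, hsq]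
    field_simp
    rw [← hs4]
  -- squeeze for f
  have hbounds : ∀ᶠ n : ℕ in atTop, S n - T n ≤ f n ∧ f n ≤ S n + T n := by
    filter_upwards [hM1, hL1] with n hm hl
    have hM0 : (0:ℝ) < M n := by linarith
    have hl0 : 0 ≤ l n := by
      show (0:ℝ) ≤ ((Lseq σ γ n : ℤ) : ℝ)
      exact_mod_cast hl
    have hgauss := gauss_Icc (Lseq σ γ n) hl
    have hcard : ((Finset.Icc (1:ℤ) (Lseq σ γ n)).card : ℝ) = l n := by
      rw [Int.card_Icc]
      have : ((Lseq σ γ n) + 1 - 1).toNat = (Lseq σ γ n).toNat := by omega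
      rw [this]
      show (((Lseq σ γ n).toNat : ℕ) : ℝ) = ((Lseq σ γ n : ℤ) : ℝ)
      exact_mod_cast Int.toNat_of_nonneg hl
    have hterm : ∀ p ∈ Finset.Icc (1:ℤ) (Lseq σ γ n),
        (-(p:ℝ)/(12 * M n) - l n ^ 2 / M n ^ 2 ≤
          Real.log (1 + (p:ℝ)/(4 * M n)) - Real.log (1 + (p:ℝ)/(3 * M n)) ∧
        Real.log (1 + (p:ℝ)/(4 * M n)) - Real.log (1 + (p:ℝ)/(3 * M n)) ≤
          -(p:ℝ)/(12 * M n) + l n ^ 2 / M n ^ 2) := by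
      intro p hp
      rw [Finset.mem_Icc] at hp
      have hp1 : (1:ℝ) ≤ (p:ℝ) := by exact_mod_cast hp.1
      have hpl : (p:ℝ) ≤ l n := by
        show (p:ℝ) ≤ ((Lseq σ γ n : ℤ) : ℝ)
        exact_mod_cast hp.2
      set x : ℝ := (p:ℝ)/(4 * M n) with hx
      set y : ℝ := (p:ℝ)/(3 * M n) with hy
      have hx0 : 0 ≤ x := by positivity
      have hy0 : 0 ≤ y := by positivity
      have hxy : x - y = -(p:ℝ)/(12 * M n) := by
        rw [hx, hy]; field_simp; ring
      have hpp : (p:ℝ) * (p:ℝ) ≤ l n * l n :=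
        mul_self_le_mul_self (by linarith) hpl
      have hppM := mul_le_mul_of_nonneg_right hpp (sq_nonneg (M n))
      have hx2 : x ^ 2 ≤ l n ^ 2 / M n ^ 2 := by
        rw [hx, div_pow]
        rw [div_le_div_iff₀ (by positivity) (by positivity)]
        nlinarith [sq_nonneg (l n * M n)]
      have hy2 : y ^ 2 ≤ l n ^ 2 / M n ^ 2 := by
        rw [hy, div_pow]
        rw [div_le_div_iff₀ (by positivity) (by positivity)]
        nlinarith [sq_nonneg (l n * M n)]
      have hlogx_le := log_one_add_le hx0
      have hlogy_le := log_one_add_le hy0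
      have hlogx_ge := le_log_one_add hx0
      have hlogy_ge := le_log_one_add hy0
      constructor
      · linarith
      · linarith
    constructor
    · -- lower bound
      have h1 : ∑ p ∈ Finset.Icc (1:ℤ) (Lseq σ γ n),
          (-(p:ℝ)/(12 * M n) - l n ^ 2 / M n ^ 2) ≤ f n :=
        Finset.sum_le_sum (fun p hp => (hterm p hp).1)
      have h2 : ∑ p ∈ Finset.Icc (1:ℤ) (Lseq σ γ n),
          (-(p:ℝ)/(12 * M n) - l n ^ 2 / M n ^ 2) = S n - T n := by
        rw [Finset.sum_sub_distrib, Finset.sum_const, nsmul_eq_mul, hcard]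
        have hsum : ∑ p ∈ Finset.Icc (1:ℤ) (Lseq σ γ n), (-(p:ℝ)/(12 * M n))
            = -(∑ p ∈ Finset.Icc (1:ℤ) (Lseq σ γ n), (p:ℝ)) / (12 * M n) := by
          rw [← Finset.sum_div, ← Finset.sum_neg_distrib]
        rw [hsum, hgauss, hS_def, hT_def]
        field_simp
        ring
      rw [h2] at h1
      linarith
    · -- upper bound
      have h1 : f n ≤ ∑ p ∈ Finset.Icc (1:ℤ) (Lseq σ γ n),
          (-(p:ℝ)/(12 * M n) + l n ^ 2 / M n ^ 2) :=
        Finset.sum_le_sum (fun p hp => (hterm p hp).2)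
      have h2 : ∑ p ∈ Finset.Icc (1:ℤ) (Lseq σ γ n),
          (-(p:ℝ)/(12 * M n) + l n ^ 2 / M n ^ 2) = S n + T n := by
        rw [Finset.sum_add_distrib, Finset.sum_const, nsmul_eq_mul, hcard]
        have hsum : ∑ p ∈ Finset.Icc (1:ℤ) (Lseq σ γ n), (-(p:ℝ)/(12 * M n))
            = -(∑ p ∈ Finset.Icc (1:ℤ) (Lseq σ γ n), (p:ℝ)) / (12 * M n) := by
          rw [← Finset.sum_div, ← Finset.sum_neg_distrib]
        rw [hsum, hgauss, hS_def, hT_def]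
        field_simp
        ring
      rw [h2] at h1
      linarith
  have hf : Tendsto f atTop (nhds (-σ ^ 2 / (3 * ρ))) := by
    have hlo : Tendsto (fun n => S n - T n) atTop (nhds (-σ ^ 2 / (3 * ρ))) := by
      simpa using hS.sub hT
    have hhi : Tendsto (fun n => S n + T n) atTop (nhds (-σ ^ 2 / (3 * ρ))) := by
      simpa using hS.add hT
    exact tendsto_of_tendsto_of_tendsto_of_le_of_le' hlo hhi
      (hbounds.mono fun n h => h.1) (hbounds.mono fun n h => h.2)
  -- ratio = exp ∘ f eventually
  have hexp : Tendsto (fun n => Real.exp (f n)) atTop (nhds (Real.exp (-σ ^ 2 / (3 * ρ)))) :=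
    (Real.continuous_exp.tendsto _).comp hf
  refine hexp.congr' ?_
  filter_upwards [hM1] with n hm
  have hM0 : (0:ℝ) < M n := by linarith
  have hpos4 : ∀ p ∈ Finset.Icc (1:ℤ) (Lseq σ γ n), (0:ℝ) < 1 + (p:ℝ)/(4 * M n) := by
    intro p hp
    rw [Finset.mem_Icc] at hp
    have : (1:ℝ) ≤ (p:ℝ) := by exact_mod_cast hp.1
    positivity
  have hpos3 : ∀ p ∈ Finset.Icc (1:ℤ) (Lseq σ γ n), (0:ℝ) < 1 + (p:ℝ)/(3 * M n) := by
    intro p hp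
    rw [Finset.mem_Icc] at hp
    have : (1:ℝ) ≤ (p:ℝ) := by exact_mod_cast hp.1
    positivity
  have e4 : Real.exp (∑ p ∈ Finset.Icc (1:ℤ) (Lseq σ γ n), Real.log (1 + (p:ℝ)/(4 * M n)))
      = ∏ p ∈ Finset.Icc (1:ℤ) (Lseq σ γ n), (1 + (p:ℝ)/(4 * M n)) := by
    rw [Real.exp_sum]
    exact Finset.prod_congr rfl (fun p hp => Real.exp_log (hpos4 p hp))
  have e3 : Real.exp (∑ p ∈ Finset.Icc (1:ℤ) (Lseq σ γ n), Real.log (1 + (p:ℝ)/(3 * M n)))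
      = ∏ p ∈ Finset.Icc (1:ℤ) (Lseq σ γ n), (1 + (p:ℝ)/(3 * M n)) := by
    rw [Real.exp_sum]
    exact Finset.prod_congr rfl (fun p hp => Real.exp_log (hpos3 p hp))
  have : Real.exp (f n) = Real.exp (∑ p ∈ Finset.Icc (1:ℤ) (Lseq σ γ n),
        Real.log (1 + (p:ℝ)/(4 * M n)))
      / Real.exp (∑ p ∈ Finset.Icc (1:ℤ) (Lseq σ γ n), Real.log (1 + (p:ℝ)/(3 * M n))) := by
    rw [← Real.exp_sub]
    congr 1
    exact Finset.sum_sub_distrib _ _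
  rw [this, e4, e3]
end

section
/- Let ρ > 0, σ > 0 and γ ∈ ℝ. Set L_n = 2⌊√(2n)·σ⌋ + ⌊(8n/9)^{1/4}·γ⌋ and m_n = ⌊nρ⌋ (both are positive for all sufficiently large n). Then, as n → ∞, (1 + L_n/(4 m_n))^{4 m_n} / exp(L_n − σ²/ρ) converges to 1. -/
open Filter

lemma floor_div_tendsto {a b : ℕ → ℝ} {c : ℝ} (hb : Tendsto b atTop atTop)
    (h : Tendsto (fun n => a n / b n) atTop (nhds c)) :
    Tendsto (fun n => ((⌊a n⌋ : ℝ) / b n)) atTop (nhds c) := by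
  have hb0 : ∀ᶠ n in atTop, 0 < b n := hb.eventually_gt_atTop 0
  have hlo : Tendsto (fun n => a n / b n - (b n)⁻¹) atTop (nhds c) := by
    simpa using h.sub hb.inv_tendsto_atTop
  refine tendsto_of_tendsto_of_tendsto_of_le_of_le' hlo h ?_ ?_
  · filter_upwards [hb0] with n hn
    have h1 : a n - 1 ≤ (⌊a n⌋ : ℝ) := (Int.sub_one_lt_floor _).le
    have : (a n - 1) / b n ≤ (⌊a n⌋ : ℝ) / b n := by gcongr
    calc a n / b n - (b n)⁻¹ = (a n - 1) / b n := by field_simp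
    _ ≤ _ := this
  · filter_upwards [hb0] with n hn
    gcongr
    exact Int.floor_le _

/-- As `n → ∞`, `(1 + L_n/(4 m_n))^{4 m_n} / exp(L_n − σ²/ρ)` converges to `1`. -/
theorem tendsto_pow_four (ρ σ γ : ℝ) (hρ : 0 < ρ) (hσ : 0 < σ) :
    Tendsto
      (fun n : ℕ =>
        (1 + (Lseq σ γ n : ℝ) / (4 * (mseq ρ n : ℝ))) ^ (4 * mseq ρ n) /
          Real.exp ((Lseq σ γ n : ℝ) - σ ^ 2 / ρ))
      atTop (nhds 1) := by
  set L : ℕ → ℝ := fun n => ((Lseq σ γ n : ℝ)) with hLdef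
  set m : ℕ → ℝ := fun n => ((mseq ρ n : ℝ)) with hmdef
  set s : ℕ → ℝ := fun n => Real.sqrt n with hsdef
  have hs : Tendsto s atTop atTop := sqrt_nat_tendsto
  have hs0 : ∀ᶠ n : ℕ in atTop, 0 < s n := hs.eventually_gt_atTop 0
  -- first floor term
  have h1a : Tendsto (fun n : ℕ => ((⌊Real.sqrt (2 * (n:ℝ)) * σ⌋ : ℝ)) / s n) atTop
      (nhds (Real.sqrt 2 * σ)) := by
    apply floor_div_tendsto hs
    apply Tendsto.congr' ?_ (tendsto_const_nhds (x := Real.sqrt 2 * σ))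
    filter_upwards [hs0] with n hn
    have : Real.sqrt (2 * (n:ℝ)) = Real.sqrt 2 * s n := Real.sqrt_mul (by norm_num) _
    rw [this]
    field_simp
  -- second floor term
  have h1b : Tendsto (fun n : ℕ => ((⌊(8 * (n:ℝ) / 9) ^ ((1:ℝ)/4) * γ⌋ : ℝ)) / s n) atTop
      (nhds 0) := by
    apply floor_div_tendsto hs
    have key : Tendsto (fun n : ℕ => γ * (8/9 : ℝ) ^ ((1:ℝ)/4) * ((n:ℝ) ^ (-(1/4 : ℝ)))) atTop
        (nhds 0) := by
      have := (tendsto_rpow_neg_atTop (y := 1/4) (by norm_num)).comp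
        (tendsto_natCast_atTop_atTop (R := ℝ))
      simpa using (this.const_mul (γ * (8/9 : ℝ) ^ ((1:ℝ)/4)))
    apply Tendsto.congr' ?_ key
    filter_upwards [eventually_gt_atTop 0] with n hn
    have hn0 : (0:ℝ) < (n:ℝ) := by exact_mod_cast hn
    have h89 : (8 * (n:ℝ) / 9) = (8/9 : ℝ) * n := by ring
    have hsn : s n = (n:ℝ) ^ ((1:ℝ)/2) := Real.sqrt_eq_rpow _
    rw [h89, Real.mul_rpow (by norm_num) hn0.le, hsn]
    rw [show (-(1/4 : ℝ)) = (1:ℝ)/4 - 1/2 by norm_num, Real.rpow_sub hn0]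
    field_simp
  -- m / n → ρ
  have h2 : Tendsto (fun n : ℕ => m n / (n:ℝ)) atTop (nhds ρ) := by
    apply floor_div_tendsto tendsto_natCast_atTop_atTop
    apply Tendsto.congr' ?_ (tendsto_const_nhds (x := ρ))
    filter_upwards [eventually_gt_atTop 0] with n hn
    have hn0 : (0:ℝ) < (n:ℝ) := by exact_mod_cast hn
    field_simp
  set c : ℝ := 2 * (Real.sqrt 2 * σ) with hcdef
  have hc : 0 < c := by positivity
  -- L / √n → c
  have hL : Tendsto (fun n => L n / s n) atTop (nhds c) := by
    have : Tendsto (fun n : ℕ =>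
        2 * (((⌊Real.sqrt (2 * (n:ℝ)) * σ⌋ : ℝ)) / s n)
          + ((⌊(8 * (n:ℝ) / 9) ^ ((1:ℝ)/4) * γ⌋ : ℝ)) / s n) atTop (nhds (c + 0)) :=
      (h1a.const_mul 2).add h1b
    rw [add_zero] at this
    apply this.congr fun n => ?_
    simp only [hLdef, Lseq]
    push_cast
    ring
  -- n / m → ρ⁻¹
  have hnm : Tendsto (fun n : ℕ => (n:ℝ) / m n) atTop (nhds ρ⁻¹) := by
    have := h2.inv₀ hρ.ne'
    apply this.congr fun n => ?_
    rw [inv_div]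
  -- m → ∞
  have hmtop : Tendsto m atTop atTop := by
    have : Tendsto (fun n : ℕ => (m n / (n:ℝ)) * (n:ℝ)) atTop atTop :=
      Tendsto.pos_mul_atTop hρ h2 tendsto_natCast_atTop_atTop
    apply this.congr'
    filter_upwards [eventually_gt_atTop 0] with n hn
    have hn0 : (0:ℝ) < (n:ℝ) := by exact_mod_cast hn
    field_simp
  have hm0 : ∀ᶠ n : ℕ in atTop, 0 < m n := hmtop.eventually_gt_atTop 0
  -- L → ∞
  have hLtop : Tendsto L atTop atTop := by
    have : Tendsto (fun n : ℕ => (L n / s n) * s n) atTop atTop :=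
      Tendsto.pos_mul_atTop hc hL hs
    apply this.congr'
    filter_upwards [hs0] with n hn
    field_simp
  have hL0 : ∀ᶠ n : ℕ in atTop, 0 < L n := hLtop.eventually_gt_atTop 0
  set t : ℕ → ℝ := fun n => L n / (4 * m n) with htdef
  -- t → 0
  have ht : Tendsto t atTop (nhds 0) := by
    have h4s : Tendsto (fun n : ℕ => 4 * s n) atTop atTop := by
      apply Tendsto.const_mul_atTop (by norm_num) hs
    have h0 : Tendsto (fun n : ℕ => ((n:ℝ) / m n) / (4 * s n)) atTop (nhds 0) :=
      hnm.div_atTop h4s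
    have := hL.mul h0
    rw [mul_zero] at this
    apply this.congr'
    filter_upwards [hs0, hm0] with n hsn hmn
    have hss : s n * s n = (n:ℝ) := Real.mul_self_sqrt (Nat.cast_nonneg n)
    field_simp [htdef]
    simp only [htdef]
    field_simp
    rw [← hss]
    ring
  -- q = L² / (8 m) → σ²/ρ
  set q : ℕ → ℝ := fun n => L n ^ 2 / (8 * m n) with hqdef
  have hq : Tendsto q atTop (nhds (σ ^ 2 / ρ)) := by
    have h0 : Tendsto (fun n : ℕ => (L n / s n) ^ 2 * ((n:ℝ) / m n) / 8) atTop
        (nhds (c ^ 2 * ρ⁻¹ / 8)) := by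
      exact ((hL.pow 2).mul hnm).div_const 8
    have hc2 : c ^ 2 * ρ⁻¹ / 8 = σ ^ 2 / ρ := by
      have h2' : Real.sqrt 2 ^ 2 = 2 := Real.sq_sqrt (by norm_num)
      have hcc : c ^ 2 = 8 * σ ^ 2 := by
        rw [hcdef]; linear_combination (4 * σ ^ 2) * h2'
      rw [hcc]
      field_simp [hρ.ne']
    rw [hc2] at h0
    apply h0.congr'
    filter_upwards [hs0, hm0] with n hsn hmn
    have hss : s n * s n = (n:ℝ) := Real.mul_self_sqrt (Nat.cast_nonneg n)
    field_simp [hqdef]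
    simp only [hqdef]
    field_simp
    rw [← hss]
    ring
  -- eventually 0 < t ≤ 1/2
  have htpos : ∀ᶠ n : ℕ in atTop, 0 < t n := by
    filter_upwards [hL0, hm0] with n h1 h2
    exact div_pos h1 (by linarith)
  have thalf : ∀ᶠ n : ℕ in atTop, t n ≤ 1/2 := by
    have := ht.eventually (eventually_le_nhds (by norm_num : (0:ℝ) < 1/2))
    filter_upwards [this] with n h using h
  -- B → 0
  set B : ℕ → ℝ := fun n => 4 * m n * (Real.log (1 + t n) - t n + t n ^ 2 / 2) with hBdef
  have hB : Tendsto B atTop (nhds 0) := by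
    have hbound : Tendsto (fun n => 4 * q n * t n) atTop (nhds 0) := by
      have := (hq.const_mul 4).mul ht
      simpa using this
    refine squeeze_zero_norm' ?_ hbound
    filter_upwards [htpos, thalf, hm0] with n h1 h2 hm
    have hxlt : |(-(t n))| < 1 := by
      rw [abs_neg, abs_of_pos h1]; linarith
    have key := Real.abs_log_sub_add_sum_range_le hxlt 2
    have hsum : (∑ i ∈ Finset.range 2, (-(t n)) ^ (i + 1) / ((i:ℝ) + 1))
        = -(t n) + t n ^ 2 / 2 := by
      simp [Finset.sum_range_succ]
      ring
    rw [hsum, abs_neg, abs_of_pos h1] at key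
    have hkey2 : |Real.log (1 + t n) - t n + t n ^ 2 / 2| ≤ t n ^ 3 / (1 - t n) := by
      have : -(t n) + t n ^ 2 / 2 + Real.log (1 - -(t n))
          = Real.log (1 + t n) - t n + t n ^ 2 / 2 := by
        rw [show (1 : ℝ) - -(t n) = 1 + t n by ring]; ring
      rwa [this] at key
    have hden : (1:ℝ)/2 ≤ 1 - t n := by linarith
    have hb2 : t n ^ 3 / (1 - t n) ≤ 2 * t n ^ 3 := by
      rw [div_le_iff₀ (by linarith)]
      nlinarith [pow_pos h1 3]
    have habs : ‖B n‖ ≤ 4 * m n * (2 * t n ^ 3) := by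
      rw [hBdef]
      simp only [Real.norm_eq_abs]
      rw [abs_mul, abs_of_pos (by linarith : (0:ℝ) < 4 * m n)]
      exact mul_le_mul_of_nonneg_left (hkey2.trans hb2) (by linarith)
    refine habs.trans (le_of_eq ?_)
    rw [hqdef, htdef]
    field_simp
    ring
  -- C → 0
  set C : ℕ → ℝ := fun n => σ ^ 2 / ρ - q n with hCdef
  have hC : Tendsto C atTop (nhds 0) := by
    have := (tendsto_const_nhds (x := σ ^ 2 / ρ)).sub hq
    simpa using this
  -- A → 0
  set A : ℕ → ℝ := fun n => 4 * m n * Real.log (1 + t n) - (L n - σ ^ 2 / ρ) with hAdef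
  have hA : Tendsto A atTop (nhds 0) := by
    have := hB.add hC
    rw [add_zero] at this
    apply this.congr'
    filter_upwards [hm0] with n hm
    rw [hBdef, hCdef, hAdef, hqdef, htdef]
    field_simp
    ring
  -- conclude
  have hexp : Tendsto (fun n => Real.exp (A n)) atTop (nhds 1) := by
    have := (Real.continuous_exp.tendsto 0).comp hA
    simpa [Function.comp_def] using this
  apply hexp.congr'
  filter_upwards [htpos, hm0] with n h1 hm
  have hx : (0:ℝ) < 1 + t n := by linarith
  have hzpow : (1 + t n) ^ (4 * mseq ρ n)
      = Real.exp (Real.log (1 + t n) * ((4 * mseq ρ n : ℤ) : ℝ)) := by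
    rw [← Real.rpow_def_of_pos hx, Real.rpow_intCast]
  have hcast : ((4 * mseq ρ n : ℤ) : ℝ) = 4 * m n := by push_cast; ring
  calc Real.exp (A n)
      = Real.exp (Real.log (1 + t n) * (4 * m n)) / Real.exp (L n - σ ^ 2 / ρ) := by
        rw [← Real.exp_sub, hAdef]; ring_nf
    _ = (1 + t n) ^ (4 * mseq ρ n) / Real.exp (L n - σ ^ 2 / ρ) := by
        rw [hzpow, hcast]
    _ = _ := by rw [htdef]
end

section
/- Let σ ∈ ℕ and γ ∈ ℤ with |γ| ≤ σ, and let M ∈ ℳ_σ^γ be a Motzkin path. Then the extension M̃ = (M̃_i)_{0 ≤ i ≤ 2σ+γ} of M satisfies: M̃_0 = 0, M̃_{2σ+γ} = γ, and M̃_{i+1} − M̃_i ∈ {−1, +1} for every 0 ≤ i < 2σ+γ (in particular M̃ ∈ ℳ_{2σ+γ}^γ); moreover, for every t ∈ {0, 1, ..., σ} one has 0 ≤ 2t + M_t ≤ 2σ+γ and M̃_{2t + M_t} = M_t. -/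
/-- The extension of a Motzkin path, given as the list of its steps: each step `0`
is replaced by the two steps `+1, −1` (inserting the value `M_i + 1`), each step
`+1` is replaced by the three steps `+1, +1, −1` (inserting `M_i + 1, M_i + 2`),
and each step `−1` is kept. -/
def extendSteps (l : List ℤ) : List ℤ :=
  l.flatMap fun d => if d = 0 then [1, -1] else if d = 1 then [1, 1, -1] else [-1]

/-- The list of steps of the path `M` up to time `σ`. -/
def stepsOf (σ : ℕ) (M : ℕ → ℤ) : List ℤ :=
  (List.range σ).map fun t => M (t + 1) - M t

/-- The extension `M̃` of a Motzkin path `M` of length `σ`, as a function: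
`M̃_i` is the sum of the first `i` extended steps. -/
def extPath (σ : ℕ) (M : ℕ → ℤ) (i : ℕ) : ℤ :=
  ((extendSteps (stepsOf σ M)).take i).sum


lemma stepsOf_succ (t : ℕ) (M : ℕ → ℤ) :
    stepsOf (t + 1) M = stepsOf t M ++ [M (t + 1) - M t] := by
  simp [stepsOf, List.range_succ]

lemma extendSteps_append (l₁ l₂ : List ℤ) :
    extendSteps (l₁ ++ l₂) = extendSteps l₁ ++ extendSteps l₂ := by
  simp [extendSteps]

lemma key_s15 (σ : ℕ) (M : ℕ → ℤ)
    (hstep : ∀ i < σ,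
      M (i + 1) - M i = -1 ∨ M (i + 1) - M i = 0 ∨ M (i + 1) - M i = 1) :
    ∀ t ≤ σ,
      ((extendSteps (stepsOf t M)).length : ℤ) = 2 * t + (M t - M 0) ∧
      (extendSteps (stepsOf t M)).sum = M t - M 0 := by
  intro t ht
  induction t with
  | zero => simp [stepsOf, extendSteps]
  | succ n ih =>
    obtain ⟨hl, hs⟩ := ih (by omega)
    rw [stepsOf_succ, extendSteps_append]
    rcases hstep n (by omega) with h | h | h <;>
    · constructor
      · rw [List.length_append]; push_cast [hl]; simp [extendSteps, h]
        linarith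
      · rw [List.sum_append, hs]; simp [extendSteps, h]; linarith

lemma prefix_ext (t k : ℕ) (M : ℕ → ℤ) :
    extendSteps (stepsOf t M) <+: extendSteps (stepsOf (t + k) M) := by
  induction k with
  | zero => simp
  | succ m ih =>
    refine ih.trans ?_
    rw [show t + (m + 1) = (t + m) + 1 by omega, stepsOf_succ, extendSteps_append]
    exact List.prefix_append _ _

lemma mem_ext (σ : ℕ) (M : ℕ → ℤ)
    (hstep : ∀ i < σ,
      M (i + 1) - M i = -1 ∨ M (i + 1) - M i = 0 ∨ M (i + 1) - M i = 1) :
    ∀ x ∈ extendSteps (stepsOf σ M), x = -1 ∨ x = 1 := by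
  intro x hx
  rw [extendSteps, List.mem_flatMap] at hx
  obtain ⟨d, hd, hxd⟩ := hx
  rw [stepsOf, List.mem_map] at hd
  obtain ⟨t, htmem, rfl⟩ := hd
  rw [List.mem_range] at htmem
  rcases hstep t htmem with h | h | h <;> rw [h] at hxd <;> simp at hxd <;> tauto


/-- If `M ∈ ℳ_σ^γ` is a Motzkin path, then its extension `M̃` has `2σ+γ+1` entries,
satisfies `M̃_0 = 0`, `M̃_{2σ+γ} = γ`, has increments in `{−1, +1}` (so
`M̃ ∈ ℳ_{2σ+γ}^γ`), and for every `t ∈ {0, …, σ}` one has `0 ≤ 2t + M_t ≤ 2σ+γ`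
and `M̃_{2t + M_t} = M_t`. -/
theorem extPath_spec (σ : ℕ) (γ : ℤ) (hγ : |γ| ≤ (σ : ℤ)) (M : ℕ → ℤ)
    (h0 : M 0 = 0) (hend : M σ = γ)
    (hstep : ∀ i < σ,
      M (i + 1) - M i = -1 ∨ M (i + 1) - M i = 0 ∨ M (i + 1) - M i = 1) :
    (extendSteps (stepsOf σ M)).length = (2 * (σ : ℤ) + γ).toNat ∧
    extPath σ M 0 = 0 ∧
    extPath σ M (2 * (σ : ℤ) + γ).toNat = γ ∧
    (∀ i : ℕ, (i : ℤ) < 2 * (σ : ℤ) + γ →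
      extPath σ M (i + 1) - extPath σ M i = -1 ∨
        extPath σ M (i + 1) - extPath σ M i = 1) ∧
    (∀ t : ℕ, t ≤ σ →
      0 ≤ 2 * (t : ℤ) + M t ∧ 2 * (t : ℤ) + M t ≤ 2 * (σ : ℤ) + γ ∧
        extPath σ M (2 * (t : ℤ) + M t).toNat = M t) := by
  have habs := abs_le.mp hγ
  obtain ⟨hlenσ, hsumσ⟩ := key_s15 σ M hstep σ le_rfl
  rw [h0, hend, sub_zero] at hlenσ hsumσ
  have hlen : (extendSteps (stepsOf σ M)).length = (2 * (σ : ℤ) + γ).toNat := by omega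
  refine ⟨hlen, by simp [extPath], ?_, ?_, ?_⟩
  · rw [extPath, ← hlen, List.take_length, hsumσ]
  · intro i hi
    have hiL : i < (extendSteps (stepsOf σ M)).length := by omega
    have : extPath σ M (i + 1) - extPath σ M i =
        (extendSteps (stepsOf σ M))[i] := by
      rw [extPath, extPath, List.sum_take_succ _ _ hiL]; ring
    rw [this]
    exact mem_ext σ M hstep _ (List.getElem_mem hiL)
  · intro t ht
    obtain ⟨hlt, hst⟩ := key_s15 σ M hstep t ht
    rw [h0, sub_zero] at hlt hst
    have hpre : extendSteps (stepsOf t M) <+: extendSteps (stepsOf σ M) := by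
      have := prefix_ext t (σ - t) M
      rwa [Nat.add_sub_cancel' ht] at this
    have hle := hpre.length_le
    refine ⟨by omega, by omega, ?_⟩
    have htn : (2 * (t : ℤ) + M t).toNat = (extendSteps (stepsOf t M)).length := by omega
    obtain ⟨r, hr⟩ := hpre
    rw [extPath, htn, ← hr, List.take_left, hst]
end
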